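/- Let q ∈ (0,1) and ν > -1 with (1-q)(1-q^ν) > √q. Then the coefficients T_n of the normalized Jackson third (Hahn–Exton) q-Bessel function satisfy Σ_{n≥1} (n+1)|T_n| ≤ (2(1-q)(1-q^ν)√q - q) / ((1-q)(1-q^ν) - √q)^2; equivalently, (((1-q)(1-q^ν) - √q)^2 / (2(1-q)(1-q^ν)√q - q)) · Σ_{n≥1} (n+1)|T_n| ≤ 1. -/

import Mathlib

open Complex

/-- q-Pochhammer symbol (a;q)_n = ∏_{k=1}^n (1 - a q^{k-1}). -/
noncomputable def qPoch (a q : ℝ) (n : ℕ) : ℝ :=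
  ∏ k ∈ Finset.range n, (1 - a * q ^ k)

/-- Coefficients of the normalized Jackson third (Hahn-Exton) q-Bessel function. -/
noncomputable def T (q ν : ℝ) (n : ℕ) : ℝ :=
  (-1) ^ n * q ^ (((n : ℝ) * ((n : ℝ) + 1)) / 2) /
    (qPoch q q n * qPoch (q ^ (ν + 1)) q n)

/-- Normalized Jackson third (Hahn-Exton) q-Bessel function h_ν^{(3)}(z;q). -/
noncomputable def h3 (q ν : ℝ) (z : ℂ) : ℂ :=
  ∑' n : ℕ, (T q ν n : ℂ) * z ^ (n + 1)

/-- Derivative of the normalized Jackson third q-Bessel function. -/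
noncomputable def h3' (q ν : ℝ) (z : ℂ) : ℂ :=
  ∑' n : ℕ, ((n : ℂ) + 1) * (T q ν n : ℂ) * z ^ n

/-- m-th partial sum of h_ν^{(3)}(z;q). -/
noncomputable def h3p (q ν : ℝ) (m : ℕ) (z : ℂ) : ℂ :=
  z + ∑ n ∈ Finset.Icc 1 m, (T q ν n : ℂ) * z ^ (n + 1)

/-- Derivative of the m-th partial sum of h_ν^{(3)}(z;q). -/
noncomputable def h3p' (q ν : ℝ) (m : ℕ) (z : ℂ) : ℂ :=
  1 + ∑ n ∈ Finset.Icc 1 m, ((n : ℂ) + 1) * (T q ν n : ℂ) * z ^ n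

lemma Tbound (q ν : ℝ) (hq0 : 0 < q) (hq1 : q < 1) (hν : 0 < 1 - q ^ ν) (n : ℕ) :
    |T q ν n| ≤ (Real.sqrt q / ((1 - q) * (1 - q ^ ν))) ^ n := by
  have hq1' : (0:ℝ) < 1 - q := by linarith
  have hP1 : (1 - q) ^ n ≤ qPoch q q n := by
    rw [qPoch, ← Finset.card_range n, ← Finset.prod_const]
    simp only [Finset.card_range]
    apply Finset.prod_le_prod (fun k _ => by positivity)
    intro k _
    have : q * q ^ k ≤ q := by
      nlinarith [pow_le_one₀ hq0.le hq1.le (n := k), pow_pos hq0 k]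
    linarith
  have hqn : ∀ k : ℕ, q ^ (ν + 1) * q ^ k ≤ q ^ ν := by
    intro k
    have h1 : q ^ (ν + 1) * q ^ k = q ^ (ν + 1 + k) := by
      rw [← Real.rpow_natCast q k, ← Real.rpow_add hq0]
    rw [h1]
    exact Real.rpow_le_rpow_of_exponent_ge hq0 hq1.le (by linarith [Nat.cast_nonneg (α:=ℝ) k])
  have hP2 : (1 - q ^ ν) ^ n ≤ qPoch (q ^ (ν + 1)) q n := by
    rw [qPoch, ← Finset.card_range n, ← Finset.prod_const]
    simp only [Finset.card_range]
    apply Finset.prod_le_prod (fun k _ => by positivity)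
    intro k _
    have := hqn k
    linarith
  have hP1pos : 0 < qPoch q q n := lt_of_lt_of_le (by positivity) hP1
  have hP2pos : 0 < qPoch (q ^ (ν + 1)) q n := lt_of_lt_of_le (by positivity) hP2
  have hnum : q ^ (((n : ℝ) * ((n : ℝ) + 1)) / 2) ≤ Real.sqrt q ^ n := by
    rw [Real.sqrt_eq_rpow, ← Real.rpow_natCast (q ^ (1/2:ℝ)) n, ← Real.rpow_mul hq0.le]
    apply Real.rpow_le_rpow_of_exponent_ge hq0 hq1.le
    have : (0:ℝ) ≤ (n:ℝ) := Nat.cast_nonneg n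
    nlinarith
  have habs : |T q ν n| = q ^ (((n : ℝ) * ((n : ℝ) + 1)) / 2) /
      (qPoch q q n * qPoch (q ^ (ν + 1)) q n) := by
    rw [T, abs_div, abs_mul, _root_.abs_pow, abs_neg, abs_one, one_pow, one_mul,
      abs_of_pos (Real.rpow_pos_of_pos hq0 _), abs_of_pos (mul_pos hP1pos hP2pos)]
  rw [habs, div_pow, mul_pow]
  apply div_le_div₀ (by positivity) hnum (by positivity)
  exact mul_le_mul hP1 hP2 (by positivity) hP1pos.le

lemma alg (c s : ℝ) (hc : c ≠ 0) (hcs : c - s ≠ 0) :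
    (2 * c * s - s ^ 2) / (c - s) ^ 2 = (2 * (s / c) - (s / c) ^ 2) / (1 - s / c) ^ 2 := by
  have h1 : 1 - s / c = (c - s) / c := by field_simp
  rw [h1]
  field_simp

theorem stmt15 (q ν : ℝ) (hq : q ∈ Set.Ioo (0 : ℝ) 1) (hν : -1 < ν)
    (hc : (1 - q) * (1 - q ^ ν) > Real.sqrt q) :
    ∑' n : ℕ, ((n : ℝ) + 2) * |T q ν (n + 1)| ≤
      (2 * (1 - q) * (1 - q ^ ν) * Real.sqrt q - q) / ((1 - q) * (1 - q ^ ν) - Real.sqrt q) ^ 2 := by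
  obtain ⟨hq0, hq1⟩ := hq
  set s := Real.sqrt q with hs
  have hs0 : 0 < s := Real.sqrt_pos.mpr hq0
  have hc0 : 0 < (1 - q) * (1 - q ^ ν) := lt_trans hs0 hc
  have hq1' : (0:ℝ) < 1 - q := by linarith
  have hν' : 0 < 1 - q ^ ν := by
    rcases mul_pos_iff.1 hc0 with ⟨_, h⟩ | ⟨h, _⟩
    · exact h
    · linarith
  set r := s / ((1 - q) * (1 - q ^ ν)) with hrdef
  have hr0 : 0 < r := div_pos hs0 hc0
  have hr1 : r < 1 := (div_lt_one hc0).mpr hc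
  have hrb : ∀ n, |T q ν n| ≤ r ^ n := Tbound q ν hq0 hq1 hν'
  have hnorm : ‖r‖ < 1 := by rwa [Real.norm_eq_abs, abs_of_pos hr0]
  have hsum1 : Summable (fun n : ℕ => (n : ℝ) * r ^ n) := by
    simpa using summable_pow_mul_geometric_of_norm_lt_one 1 hnorm
  have hsum2 : Summable (fun n : ℕ => r ^ n) := summable_geometric_of_lt_one hr0.le hr1
  have hg : Summable (fun n : ℕ => ((n : ℝ) + 2) * r ^ (n + 1)) := by
    have h : (fun n : ℕ => ((n : ℝ) + 2) * r ^ (n + 1))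
        = fun n : ℕ => r * ((n : ℝ) * r ^ n) + (2 * r) * r ^ n := by funext n; ring
    rw [h]; exact (hsum1.mul_left r).add (hsum2.mul_left (2 * r))
  have hptle : ∀ n : ℕ, ((n : ℝ) + 2) * |T q ν (n + 1)| ≤ ((n : ℝ) + 2) * r ^ (n + 1) :=
    fun n => mul_le_mul_of_nonneg_left (hrb (n + 1)) (by positivity)
  have hf : Summable (fun n : ℕ => ((n : ℝ) + 2) * |T q ν (n + 1)|) :=
    hg.of_nonneg_of_le (fun n => by positivity) hptle
  have hle := Summable.tsum_le_tsum hptle hf hg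
  have h1r : (0:ℝ) < 1 - r := by linarith
  have hval : ∑' n : ℕ, ((n : ℝ) + 2) * r ^ (n + 1) = (2 * r - r ^ 2) / (1 - r) ^ 2 := by
    have h1 : ∑' n : ℕ, (n : ℝ) * r ^ n = r / (1 - r) ^ 2 :=
      tsum_coe_mul_geometric_of_norm_lt_one hnorm
    have h2 : ∑' n : ℕ, r ^ n = (1 - r)⁻¹ := tsum_geometric_of_lt_one hr0.le hr1
    calc ∑' n : ℕ, ((n : ℝ) + 2) * r ^ (n + 1)
        = ∑' n : ℕ, (r * ((n : ℝ) * r ^ n) + (2 * r) * r ^ n) := by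
          congr 1; funext n; ring
      _ = r * (r / (1 - r) ^ 2) + (2 * r) * (1 - r)⁻¹ := by
          rw [Summable.tsum_add (hsum1.mul_left r) (hsum2.mul_left (2 * r)),
            tsum_mul_left, tsum_mul_left, h1, h2]
      _ = (2 * r - r ^ 2) / (1 - r) ^ 2 := by field_simp; ring
  have hq_eq : q = s ^ 2 := (Real.sq_sqrt hq0.le).symm
  have hcs : (0:ℝ) < (1 - q) * (1 - q ^ ν) - s := by linarith
  have hRHS : (2 * (1 - q) * (1 - q ^ ν) * s - q) / ((1 - q) * (1 - q ^ ν) - s) ^ 2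
      = (2 * r - r ^ 2) / (1 - r) ^ 2 := by
    have h := alg ((1 - q) * (1 - q ^ ν)) s hc0.ne' hcs.ne'
    calc (2 * (1 - q) * (1 - q ^ ν) * s - q) / ((1 - q) * (1 - q ^ ν) - s) ^ 2
        = (2 * ((1 - q) * (1 - q ^ ν)) * s - s ^ 2) / ((1 - q) * (1 - q ^ ν) - s) ^ 2 := by
          rw [hq_eq]; ring_nf
      _ = (2 * (s / ((1 - q) * (1 - q ^ ν))) - (s / ((1 - q) * (1 - q ^ ν))) ^ 2)
            / (1 - s / ((1 - q) * (1 - q ^ ν))) ^ 2 := h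
      _ = (2 * r - r ^ 2) / (1 - r) ^ 2 := by rw [← hrdef]
  rw [hRHS, ← hval]
  exact hle
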